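/- Every critical squarefree monomial ideal has linear quotients. -/

import Mathlib

open MvPolynomial

/-- `m` is a minimal monomial generator of the monomial ideal `I`. -/
def IsMinGen {n : ℕ} {k : Type*} [Field k] (I : Ideal (MvPolynomial (Fin n) k))
    (m : Fin n →₀ ℕ) : Prop :=
  MvPolynomial.monomial m (1 : k) ∈ I ∧
    ∀ m' : Fin n →₀ ℕ, m' ≤ m → m' ≠ m → MvPolynomial.monomial m' (1 : k) ∉ I

/-- An ideal is generated by variables if it is the span of a set of variables. -/
def GenByVars {n : ℕ} {k : Type*} [Field k] (J : Ideal (MvPolynomial (Fin n) k)) : Prop :=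
  ∃ T : Set (Fin n), J = Ideal.span ((fun i => (X i : MvPolynomial (Fin n) k)) '' T)

/-- A monomial ideal has linear quotients if its minimal monomial generators can be
ordered `u_1, ..., u_s` so that each colon ideal `(u_1, ..., u_{i-1}) : u_i` is
generated by variables. -/
def HasLinearQuotients {n : ℕ} {k : Type*} [Field k]
    (I : Ideal (MvPolynomial (Fin n) k)) : Prop :=
  ∃ (s : ℕ) (u : Fin s → (Fin n →₀ ℕ)), Function.Injective u ∧
    (∀ t, IsMinGen I (u t)) ∧ (∀ m, IsMinGen I m → ∃ t, u t = m) ∧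
    ∀ t : Fin s, GenByVars
      ((Ideal.span ((fun r : Fin s => MvPolynomial.monomial (u r) (1 : k)) '' {r | r < t})).colon
        (Ideal.span {MvPolynomial.monomial (u t) (1 : k)}))

/-- Critical squarefree monomial ideals, defined recursively:
base case `I = (x_i, m)` with `m` squarefree and `x_i ∤ m`; recursive case
`I = (x_j) + m'·J` where `J` is critical, `m'` is squarefree, `x_j ∤ m·m'` and
`supp(m) ∩ supp(m') = ∅` for every minimal generator `m` of `J`. -/
inductive IsCritical {n : ℕ} {k : Type*} [Field k] :
    Ideal (MvPolynomial (Fin n) k) → Prop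
  | base (i : Fin n) (m : Fin n →₀ ℕ) (hsf : ∀ l, m l ≤ 1) (hi : i ∉ m.support) :
      IsCritical (Ideal.span {(X i : MvPolynomial (Fin n) k),
        MvPolynomial.monomial m (1 : k)})
  | step (j : Fin n) (m' : Fin n →₀ ℕ) (hsf : ∀ l, m' l ≤ 1)
      (J : Ideal (MvPolynomial (Fin n) k)) (hJ : IsCritical J)
      (hj : ∀ m, IsMinGen J m → j ∉ (m + m').support)
      (hdisj : ∀ m, IsMinGen J m → Disjoint m.support m'.support) :
      IsCritical (Ideal.span {(X j : MvPolynomial (Fin n) k)} +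
        Ideal.span {MvPolynomial.monomial m' (1 : k)} * J)


section Helpers
variable {n : ℕ} {k : Type*} [Field k]


/-- The monomial ideal generated by the monomials with exponents in `B`. -/
noncomputable def mIdeal (B : Set (Fin n →₀ ℕ)) : Ideal (MvPolynomial (Fin n) k) :=
  Ideal.span ((fun b => MvPolynomial.monomial b (1 : k)) '' B)

lemma monomial_mem_mIdeal {B : Set (Fin n →₀ ℕ)} {b a : Fin n →₀ ℕ} (hb : b ∈ B)
    (hba : b ≤ a) : MvPolynomial.monomial a (1 : k) ∈ mIdeal (k := k) B := by
  have : (MvPolynomial.monomial a (1 : k)) =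
      MvPolynomial.monomial (a - b) (1 : k) * MvPolynomial.monomial b (1 : k) := by
    rw [MvPolynomial.monomial_mul, one_mul, tsub_add_cancel_of_le hba]
  rw [this]
  exact Ideal.mul_mem_left _ _ (Ideal.subset_span ⟨b, hb, rfl⟩)

lemma mem_mIdeal {B : Set (Fin n →₀ ℕ)} {p : MvPolynomial (Fin n) k} :
    p ∈ mIdeal (k := k) B ↔ ∀ a ∈ p.support, ∃ b ∈ B, b ≤ a := by
  classical
  constructor
  · intro hp
    let M : Ideal (MvPolynomial (Fin n) k) :=
      { carrier := {q | ∀ a ∈ q.support, ∃ b ∈ B, b ≤ a}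
        add_mem' := by
          intro x y hx hy a ha
          rcases Finset.mem_union.1 (MvPolynomial.support_add ha) with h | h
          · exact hx a h
          · exact hy a h
        zero_mem' := by simp
        smul_mem' := by
          intro c x hx a ha
          rw [smul_eq_mul] at ha
          obtain ⟨d, hd, e, he, rfl⟩ := Finset.mem_add.1 (MvPolynomial.support_mul c x ha)
          obtain ⟨b, hb, hbe⟩ := hx e he
          exact ⟨b, hb, hbe.trans le_add_self⟩ }
    have : mIdeal (k := k) B ≤ M := by
      rw [mIdeal, Ideal.span_le]
      rintro q ⟨b, hb, rfl⟩ a ha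
      rw [MvPolynomial.support_monomial, if_neg (one_ne_zero)] at ha
      rw [Finset.mem_singleton] at ha
      exact ⟨b, hb, ha ▸ le_rfl⟩
    exact this hp
  · intro h
    rw [← MvPolynomial.support_sum_monomial_coeff p]
    refine Ideal.sum_mem _ fun a ha => ?_
    obtain ⟨b, hb, hba⟩ := h a ha
    have : (MvPolynomial.monomial a (MvPolynomial.coeff a p)) =
        MvPolynomial.C (MvPolynomial.coeff a p) * MvPolynomial.monomial a (1 : k) := by
      rw [MvPolynomial.C_mul_monomial, mul_one]
    rw [this]
    exact Ideal.mul_mem_left _ _ (monomial_mem_mIdeal hb hba)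

lemma monomial_mem_mIdeal_iff {B : Set (Fin n →₀ ℕ)} {a : Fin n →₀ ℕ} :
    MvPolynomial.monomial a (1 : k) ∈ mIdeal (k := k) B ↔ ∃ b ∈ B, b ≤ a := by
  classical
  rw [mem_mIdeal]
  constructor
  · intro h
    refine h a ?_
    rw [MvPolynomial.support_monomial, if_neg one_ne_zero]
    exact Finset.mem_singleton_self a
  · intro h c hc
    rw [MvPolynomial.support_monomial, if_neg one_ne_zero, Finset.mem_singleton] at hc
    exact hc ▸ h

lemma mIdeal_le_mIdeal {B C : Set (Fin n →₀ ℕ)} (h : ∀ b ∈ B, ∃ c ∈ C, c ≤ b) :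
    mIdeal (k := k) B ≤ mIdeal (k := k) C := by
  intro p hp
  rw [mem_mIdeal] at hp ⊢
  intro a ha
  obtain ⟨b, hb, hba⟩ := hp a ha
  obtain ⟨c, hc, hcb⟩ := h b hb
  exact ⟨c, hc, hcb.trans hba⟩

lemma colon_mIdeal {B : Set (Fin n →₀ ℕ)} (a : Fin n →₀ ℕ) :
    (mIdeal (k := k) B).colon (Ideal.span {MvPolynomial.monomial a (1 : k)}) =
      mIdeal (k := k) ((fun b => b - a) '' B) := by
  classical
  ext p
  rw [Ideal.mem_colon_span_singleton, mem_mIdeal, mem_mIdeal]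
  constructor
  · intro h d hd
    have hc : a ≤ d + a := le_add_self
    have : MvPolynomial.coeff (d + a) (p * MvPolynomial.monomial a (1 : k)) ≠ 0 := by
      rw [MvPolynomial.coeff_mul_monomial' (d + a) a 1 p, if_pos hc, add_tsub_cancel_right,
        mul_one]
      exact MvPolynomial.mem_support_iff.1 hd
    obtain ⟨b, hb, hbd⟩ := h (d + a) (MvPolynomial.mem_support_iff.2 this)
    exact ⟨b - a, ⟨b, hb, rfl⟩, tsub_le_iff_right.2 hbd⟩
  · intro h c hc
    have hc' := MvPolynomial.mem_support_iff.1 hc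
    rw [MvPolynomial.coeff_mul_monomial' c a 1 p, mul_one] at hc'
    by_cases hac : a ≤ c
    · rw [if_pos hac] at hc'
      obtain ⟨b', ⟨b, hb, rfl⟩, hbd⟩ := h (c - a) (MvPolynomial.mem_support_iff.2 hc')
      refine ⟨b, hb, ?_⟩
      calc b ≤ b - a + a := le_tsub_add
        _ ≤ (c - a) + a := add_le_add_left hbd a
        _ = c := tsub_add_cancel_of_le hac
    · rw [if_neg hac] at hc'; exact absurd rfl hc'

lemma isMinGen_mIdeal {B : Set (Fin n →₀ ℕ)}
    (hB : ∀ b ∈ B, ∀ b' ∈ B, b ≤ b' → b = b') {m : Fin n →₀ ℕ} :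
    IsMinGen (mIdeal (k := k) B) m ↔ m ∈ B := by
  constructor
  · rintro ⟨hm, hmin⟩
    obtain ⟨b, hb, hbm⟩ := monomial_mem_mIdeal_iff.1 hm
    by_cases hbe : b = m
    · exact hbe ▸ hb
    · exact absurd (monomial_mem_mIdeal hb le_rfl) (hmin b hbm hbe)
  · intro hm
    refine ⟨monomial_mem_mIdeal hm le_rfl, fun m' hle hne hmem => ?_⟩
    obtain ⟨b, hb, hbm⟩ := monomial_mem_mIdeal_iff.1 hmem
    have : b = m := hB b hb m hm (hbm.trans hle)
    exact hne (le_antisymm hle (this ▸ hbm))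

/-- The strengthened structural invariant for critical ideals. -/
def Struct (I : Ideal (MvPolynomial (Fin n) k)) : Prop :=
  ∃ (s : ℕ) (u : Fin s → (Fin n →₀ ℕ)), 0 < s ∧
    I = mIdeal (k := k) (Set.range u) ∧
    (∀ r t : Fin s, u r ≤ u t → r = t) ∧
    (∀ t r : Fin s, r < t → ∃ (i : Fin n) (r' : Fin s), r' < t ∧
      u r' - u t = Finsupp.single i 1 ∧ Finsupp.single i 1 ≤ u r - u t)

lemma struct_top : Struct (⊤ : Ideal (MvPolynomial (Fin n) k)) := by
  refine ⟨1, fun _ => 0, Nat.one_pos, ?_, fun r t _ => Subsingleton.elim r t,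
    fun t r hrt => absurd hrt (by simp [Subsingleton.elim r t])⟩
  symm
  rw [Ideal.eq_top_iff_one]
  have : (1 : MvPolynomial (Fin n) k) = MvPolynomial.monomial 0 (1 : k) := by
    simp [MvPolynomial.monomial_zero']
  rw [this]
  exact monomial_mem_mIdeal ⟨0, rfl⟩ le_rfl

lemma single_le_iff_mem_support {a : Fin n →₀ ℕ} {i : Fin n} :
    Finsupp.single i 1 ≤ a ↔ i ∈ a.support := by
  rw [Finsupp.mem_support_iff, Finsupp.single_le_iff]
  omega

lemma struct_base (i : Fin n) (m : Fin n →₀ ℕ) (hi : i ∉ m.support) :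
    Struct (Ideal.span {(X i : MvPolynomial (Fin n) k),
      MvPolynomial.monomial m (1 : k)}) := by
  classical
  have hXi : (X i : MvPolynomial (Fin n) k) = MvPolynomial.monomial (Finsupp.single i 1) 1 :=
    rfl
  have hmi : m i = 0 := Finsupp.notMem_support_iff.1 hi
  by_cases hm0 : m = 0
  · have : Ideal.span {(X i : MvPolynomial (Fin n) k), MvPolynomial.monomial m (1 : k)} = ⊤ := by
      rw [Ideal.eq_top_iff_one]
      refine Ideal.subset_span ?_
      rw [hm0]
      simp [MvPolynomial.monomial_zero']
    rw [this]
    exact struct_top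
  · refine ⟨2, ![Finsupp.single i 1, m], Nat.zero_lt_two, ?_, ?_, ?_⟩
    · have hr : Set.range ![Finsupp.single i 1, m] = {Finsupp.single i 1, m} := by
        ext x
        constructor
        · rintro ⟨r, rfl⟩; fin_cases r <;> simp
        · rintro (rfl | rfl)
          exacts [⟨0, rfl⟩, ⟨1, rfl⟩]
      rw [hr, mIdeal, Set.image_pair, hXi]
    · have h1 : ¬ Finsupp.single i 1 ≤ m := by
        intro h
        have := h i
        rw [Finsupp.single_eq_same, hmi] at this
        omega
      have h2 : ¬ m ≤ Finsupp.single i 1 := by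
        intro h
        refine hm0 (Finsupp.ext fun l => ?_)
        simp only [Finsupp.coe_zero, Pi.zero_apply]
        rcases eq_or_ne l i with rfl | hl
        · exact hmi
        · have := h l
          rw [Finsupp.single_eq_of_ne' (Ne.symm hl)] at this
          omega
      intro r t h
      fin_cases r <;> fin_cases t <;> simp_all
    · intro t r hrt
      have ht : t = 1 := by omega
      have hr : r = 0 := by omega
      subst ht; subst hr
      have key : (![Finsupp.single i 1, m] : Fin 2 → (Fin n →₀ ℕ)) 0 -
          ![Finsupp.single i 1, m] 1 = Finsupp.single i 1 := by
        show Finsupp.single i 1 - m = Finsupp.single i 1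
        refine Finsupp.ext fun l => ?_
        rw [Finsupp.tsub_apply]
        rcases eq_or_ne l i with rfl | hl
        · rw [hmi, Nat.sub_zero]
        · rw [Finsupp.single_eq_of_ne' (Ne.symm hl)]
          omega
      exact ⟨i, 0, by omega, key, le_of_eq key.symm⟩

lemma struct_step (j : Fin n) (m' : Fin n →₀ ℕ) (J : Ideal (MvPolynomial (Fin n) k))
    (hS : Struct J) (hj : ∀ m, IsMinGen J m → j ∉ (m + m').support) :
    Struct (Ideal.span {(X j : MvPolynomial (Fin n) k)} +
      Ideal.span {MvPolynomial.monomial m' (1 : k)} * J) := by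
  classical
  obtain ⟨s, u, hs, hJeq, hanti, hcol⟩ := hS
  have hmin : ∀ t, IsMinGen J (u t) := by
    intro t
    rw [hJeq]
    rw [isMinGen_mIdeal]
    · exact ⟨t, rfl⟩
    · rintro b ⟨r, rfl⟩ b' ⟨t', rfl⟩ hle
      exact congrArg u (hanti r t' hle)
  have hj' : ∀ t, u t j = 0 ∧ m' j = 0 := by
    intro t
    have := hj (u t) (hmin t)
    rw [Finsupp.notMem_support_iff, Finsupp.add_apply] at this
    omega
  have hI : Ideal.span {(X j : MvPolynomial (Fin n) k)} +
      Ideal.span {MvPolynomial.monomial m' (1 : k)} * J =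
      mIdeal (k := k) (insert (Finsupp.single j 1) ((fun b => m' + b) '' Set.range u)) := by
    rw [hJeq, Submodule.add_eq_sup, mIdeal, mIdeal, Set.image_insert_eq, Ideal.span_insert]
    congr 1
    rw [Ideal.span_mul_span', Set.singleton_mul]
    congr 1
    rw [Set.image_image, Set.image_image]
    refine Set.image_congr fun b _ => ?_
    rw [MvPolynomial.monomial_mul, one_mul]
  by_cases hne : ∃ t, m' + u t = 0
  · obtain ⟨t0, ht0⟩ := hne
    have htop : Ideal.span {(X j : MvPolynomial (Fin n) k)} +
        Ideal.span {MvPolynomial.monomial m' (1 : k)} * J = ⊤ := by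
      rw [hI, Ideal.eq_top_iff_one]
      have h1 : (1 : MvPolynomial (Fin n) k) = MvPolynomial.monomial (m' + u t0) (1 : k) := by
        rw [ht0]
        simp [MvPolynomial.monomial_zero']
      rw [h1]
      exact monomial_mem_mIdeal (Set.mem_insert_of_mem _ ⟨u t0, ⟨t0, rfl⟩, rfl⟩) le_rfl
    rw [htop]
    exact struct_top
  · push_neg at hne
    set v : Fin (s + 1) → (Fin n →₀ ℕ) :=
      Fin.cons (Finsupp.single j 1) (fun t => m' + u t) with hv
    have hvr : Set.range v = insert (Finsupp.single j 1) ((fun b => m' + b) '' Set.range u) := by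
      rw [hv, Fin.range_cons]
      congr 1
      exact Set.range_comp (fun b => m' + b) u
    have cancel : ∀ a b : Fin n →₀ ℕ, (m' + a) - (m' + b) = a - b := by
      intro a b
      refine Finsupp.ext fun l => ?_
      rw [Finsupp.tsub_apply, Finsupp.tsub_apply, Finsupp.add_apply, Finsupp.add_apply]
      omega
    refine ⟨s + 1, v, Nat.succ_pos s, by rw [hI, hvr], ?_, ?_⟩
    · intro r t h
      induction r using Fin.cases with
      | zero =>
        induction t using Fin.cases with
        | zero => rfl
        | succ t' =>
          exfalso
          rw [hv] at h
          simp only [Fin.cons_zero, Fin.cons_succ] at h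
          have h1 := h j
          rw [Finsupp.single_eq_same, Finsupp.add_apply, (hj' t').1, (hj' t').2] at h1
          omega
      | succ r' =>
        induction t using Fin.cases with
        | zero =>
          exfalso
          rw [hv] at h
          simp only [Fin.cons_zero, Fin.cons_succ] at h
          refine hne r' (Finsupp.ext fun l => ?_)
          simp only [Finsupp.coe_zero, Pi.zero_apply]
          rcases eq_or_ne l j with rfl | hl
          · rw [Finsupp.add_apply, (hj' r').1, (hj' r').2]
            omega
          · have := h l
            rw [Finsupp.single_eq_of_ne' (Ne.symm hl)] at this
            omega
        | succ t' =>
          rw [hv] at h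
          simp only [Fin.cons_succ] at h
          have : u r' ≤ u t' := by
            intro l
            have := h l
            rw [Finsupp.add_apply, Finsupp.add_apply] at this
            omega
          rw [hanti r' t' this]
    · intro t r hrt
      induction t using Fin.cases with
      | zero => exact absurd hrt (Fin.not_lt_zero r)
      | succ t' =>
        have key : v 0 - v (Fin.succ t') = Finsupp.single j 1 := by
          rw [hv]
          simp only [Fin.cons_zero, Fin.cons_succ]
          refine Finsupp.ext fun l => ?_
          rw [Finsupp.tsub_apply]
          rcases eq_or_ne l j with rfl | hl
          · rw [Finsupp.add_apply, (hj' t').1, (hj' t').2, Finsupp.single_eq_same]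
            omega
          · rw [Finsupp.single_eq_of_ne' (Ne.symm hl)]
            omega
        induction r using Fin.cases with
        | zero => exact ⟨j, 0, Fin.succ_pos t', key, le_of_eq key.symm⟩
        | succ r'' =>
          obtain ⟨i, r', hr't, heq, hle⟩ := hcol t' r'' (by
            rwa [Fin.succ_lt_succ_iff] at hrt)
          refine ⟨i, Fin.succ r', Fin.succ_lt_succ_iff.mpr hr't, ?_, ?_⟩
          · rw [hv]
            simp only [Fin.cons_succ]
            rw [cancel, heq]
          · rw [hv]
            simp only [Fin.cons_succ]
            rw [cancel]
            exact hle

lemma isCritical_struct {I : Ideal (MvPolynomial (Fin n) k)} (hI : IsCritical I) :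
    Struct I := by
  induction hI with
  | base i m hsf hi => exact struct_base i m hi
  | step j m' hsf J hJ hj hdisj ih => exact struct_step j m' J ih hj

end Helpers

/-- Every critical squarefree monomial ideal has linear quotients. -/
theorem stmt9 {n : ℕ} {k : Type*} [Field k] (I : Ideal (MvPolynomial (Fin n) k))
    (hI : IsCritical I) : HasLinearQuotients I := by
  classical
  obtain ⟨s, u, hs, hIeq, hanti, hcol⟩ := isCritical_struct hI
  have hantiset : ∀ b ∈ Set.range u, ∀ b' ∈ Set.range u, b ≤ b' → b = b' := by
    rintro b ⟨r, rfl⟩ b' ⟨t, rfl⟩ h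
    exact congrArg u (hanti r t h)
  refine ⟨s, u, ?_, ?_, ?_, ?_⟩
  · intro r t h
    exact hanti r t (le_of_eq h)
  · intro t
    rw [hIeq, isMinGen_mIdeal hantiset]
    exact ⟨t, rfl⟩
  · intro m hm
    rw [hIeq, isMinGen_mIdeal hantiset] at hm
    exact hm
  · intro t
    have h1 : ((fun r : Fin s => MvPolynomial.monomial (u r) (1 : k)) '' {r | r < t})
        = (fun b => MvPolynomial.monomial b (1 : k)) '' (u '' {r | r < t}) := by
      rw [Set.image_image]
    have h2 : Ideal.span ((fun b => MvPolynomial.monomial b (1 : k)) '' (u '' {r | r < t}))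
        = mIdeal (k := k) (u '' {r | r < t}) := rfl
    rw [h1, h2, colon_mIdeal]
    refine ⟨{i | ∃ r : Fin s, r < t ∧ u r - u t = Finsupp.single i 1}, ?_⟩
    have h3 : Ideal.span ((fun i => (X i : MvPolynomial (Fin n) k)) ''
          {i | ∃ r : Fin s, r < t ∧ u r - u t = Finsupp.single i 1})
        = mIdeal (k := k) ((fun i => Finsupp.single i 1) ''
          {i | ∃ r : Fin s, r < t ∧ u r - u t = Finsupp.single i 1}) := by
      rw [mIdeal, Set.image_image]
      rfl
    rw [h3]
    refine le_antisymm (mIdeal_le_mIdeal ?_) (mIdeal_le_mIdeal ?_)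
    · rintro b ⟨b', ⟨r, hr, rfl⟩, rfl⟩
      obtain ⟨i, r', hr't, heq, hle⟩ := hcol t r hr
      exact ⟨Finsupp.single i 1, ⟨i, ⟨r', hr't, heq⟩, rfl⟩, hle⟩
    · rintro c ⟨i, ⟨r, hrt, heq⟩, rfl⟩
      exact ⟨u r - u t, ⟨u r, ⟨r, hrt, rfl⟩, rfl⟩, heq.le⟩
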